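/- Let n be an even positive integer. Then B_n + \sum_{p-1 \mid n} 1/p is an integer, where the sum runs over primes p with p-1 dividing n; consequently the denominator of B_n (in lowest terms) equals the product of all primes p with p-1 \mid n. -/

import Mathlib

open Finset

lemma padicNorm_natCast_eq {p : ℕ} [Fact p.Prime] {j : ℕ} (hj : j ≠ 0) :
    padicNorm p (j : ℚ) = (p : ℚ) ^ (-(padicValNat p j : ℤ)) := by
  rw [padicNorm.eq_zpow_of_nonzero (by exact_mod_cast hj), padicValRat.of_nat]

lemma term_rw {n i : ℕ} (hi : i < n) (x : ℚ) :
    bernoulli i * ((n + 1).choose i : ℚ) * x ^ (n + 1 - i) / (n + 1)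
      = bernoulli i * (n.choose i : ℚ) * x ^ (n + 1 - i) / ((n + 1 - i : ℕ) : ℚ) := by
  have hid : (n + 1 - i) * (n + 1).choose i = (n + 1) * n.choose i := by
    have h1 := Nat.add_one_mul_choose_eq n (n - i)
    rw [Nat.choose_symm hi.le] at h1
    have h2 : n - i + 1 = n + 1 - i := by omega
    have h3 : Nat.choose (n+1) (n - i + 1) = Nat.choose (n+1) i := by
      conv_rhs => rw [← Nat.choose_symm (by omega : i ≤ n + 1)]
      congr 1
    rw [h3, h2] at h1
    rw [h1, Nat.mul_comm]
  have hne1 : ((n:ℚ) + 1) ≠ 0 := by positivity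
  have hne2 : ((n + 1 - i : ℕ) : ℚ) ≠ 0 := by
    have : 0 < n + 1 - i := by omega
    exact_mod_cast this.ne'
  rw [div_eq_div_iff hne1 hne2]
  have hq : ((n + 1 - i : ℕ) : ℚ) * ((n + 1).choose i : ℚ) = ((n:ℚ) + 1) * (n.choose i : ℚ) := by
    exact_mod_cast congrArg (fun m : ℕ => (m : ℚ)) hid
  linear_combination (bernoulli i * x ^ (n + 1 - i)) * hq

lemma two_pow_padicValNat_le {p j : ℕ} [hp : Fact p.Prime] (hj : j ≠ 0) :
    2 ^ padicValNat p j ≤ j := by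
  calc 2 ^ padicValNat p j ≤ p ^ padicValNat p j :=
        Nat.pow_le_pow_left hp.out.two_le _
    _ ≤ j := by
        rw [← Nat.factorization_def j hp.out]
        exact Nat.ordProj_le p hj

lemma padicValNat_lt {p j : ℕ} [hp : Fact p.Prime] (hj : j ≠ 0) :
    padicValNat p j < j :=
  lt_of_lt_of_le (Nat.lt_two_pow_self) (two_pow_padicValNat_le hj)

lemma term_bound {p n i : ℕ} [hp : Fact p.Prime] (hi : i < n)
    (hB : padicNorm p (bernoulli i) ≤ p) :
    padicNorm p (bernoulli i * ((n + 1).choose i : ℚ) * (p : ℚ) ^ (n + 1 - i) / (n + 1))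
      ≤ (p : ℚ) ^ (1 + (padicValNat p (n + 1 - i) : ℤ) - ((n + 1 - i : ℕ) : ℤ)) := by
  have hp1 : (1 : ℚ) < p := by exact_mod_cast hp.out.one_lt
  have hppos : (0 : ℚ) < p := lt_trans one_pos hp1
  set j := n + 1 - i with hjdef
  have hj0 : j ≠ 0 := by omega
  set v := padicValNat p j with hvdef
  have e1 : padicNorm p ((p : ℚ) ^ j) = (p : ℚ) ^ (-(j : ℤ)) := by
    have hc : ((p : ℚ)) ^ j = (((p ^ j : ℕ)) : ℚ) := by push_cast; ring
    rw [hc, padicNorm_natCast_eq (pow_ne_zero _ hp.out.ne_zero), padicValNat.prime_pow]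
  have e2 : padicNorm p ((j : ℕ) : ℚ) = (p : ℚ) ^ (-(v : ℤ)) :=
    padicNorm_natCast_eq hj0
  have hrw := term_rw (x := (p : ℚ)) hi
  rw [hrw, padicNorm.div, padicNorm.mul, padicNorm.mul, e1, e2]
  rw [div_eq_mul_inv, ← zpow_neg, neg_neg]
  have hC : padicNorm p ((n.choose i : ℕ) : ℚ) ≤ 1 := padicNorm.of_nat _
  have h1 : padicNorm p (bernoulli i) * padicNorm p ((n.choose i : ℕ) : ℚ)
        * (p : ℚ) ^ (-(j : ℤ)) * (p : ℚ) ^ (v : ℤ)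
      ≤ (p : ℚ) * 1 * (p : ℚ) ^ (-(j : ℤ)) * (p : ℚ) ^ (v : ℤ) := by
    have ha : padicNorm p (bernoulli i) * padicNorm p ((n.choose i : ℕ) : ℚ) ≤ (p : ℚ) * 1 :=
      mul_le_mul hB hC (padicNorm.nonneg _) (le_of_lt hppos)
    exact mul_le_mul_of_nonneg_right
      (mul_le_mul_of_nonneg_right ha (le_of_lt (zpow_pos hppos _)))
      (le_of_lt (zpow_pos hppos _))
  refine le_trans h1 (le_of_eq ?_)
  have hz : (p : ℚ) ^ (1 + (v : ℤ) - (j : ℤ))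
      = (p : ℚ) ^ (1 : ℤ) * (p : ℚ) ^ (-(j : ℤ)) * (p : ℚ) ^ (v : ℤ) := by
    rw [← zpow_add₀ (ne_of_gt hppos), ← zpow_add₀ (ne_of_gt hppos)]
    congr 1
    ring
  rw [mul_one, hz, zpow_one]

lemma bernoulli_padicNorm_le (n : ℕ) {p : ℕ} [hp : Fact p.Prime] :
    padicNorm p (bernoulli n) ≤ p := by
  have hp1 : (1 : ℚ) < p := by exact_mod_cast hp.out.one_lt
  have hppos : (0 : ℚ) < p := lt_trans one_pos hp1
  induction n using Nat.strong_induction_on with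
  | _ n ih =>
  rcases Nat.eq_zero_or_pos n with rfl | hn
  · rw [bernoulli_zero, padicNorm.one]; exact le_of_lt hp1
  have fh := sum_range_pow p n
  rw [Finset.sum_range_succ] at fh
  have hlast : bernoulli n * ((n + 1).choose n : ℚ) * (p : ℚ) ^ (n + 1 - n) / (n + 1)
      = bernoulli n * p := by
    rw [Nat.choose_succ_self_right]
    have h1 : n + 1 - n = 1 := by omega
    rw [h1]
    have hne : ((n : ℚ) + 1) ≠ 0 := by positivity
    push_cast
    field_simp
  rw [hlast] at fh
  have hS : (∑ k ∈ Finset.range p, (k : ℚ) ^ n) = ((∑ k ∈ Finset.range p, k ^ n : ℕ) : ℚ) := by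
    push_cast; rfl
  have key : bernoulli n * p = ((∑ k ∈ Finset.range p, k ^ n : ℕ) : ℚ)
      - ∑ i ∈ Finset.range n,
          bernoulli i * ((n + 1).choose i : ℚ) * (p : ℚ) ^ (n + 1 - i) / (n + 1) := by
    rw [← hS]; linarith [fh]
  have hnorm : padicNorm p (bernoulli n * p) ≤ 1 := by
    rw [key]
    refine le_trans padicNorm.sub (max_le (padicNorm.of_nat _) ?_)
    refine padicNorm.sum_le' (fun i hi => ?_) zero_le_one
    have hi' : i < n := Finset.mem_range.mp hi
    refine le_trans (term_bound hi' (ih i hi')) ?_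
    have hv : (padicValNat p (n + 1 - i) : ℤ) ≤ ((n + 1 - i : ℕ) : ℤ) - 1 := by
      have := padicValNat_lt (p := p) (j := n + 1 - i) (by omega)
      omega
    calc (p : ℚ) ^ (1 + (padicValNat p (n + 1 - i) : ℤ) - ((n + 1 - i : ℕ) : ℤ))
        ≤ (p : ℚ) ^ (0 : ℤ) := zpow_le_zpow_right₀ (le_of_lt hp1) (by omega)
      _ = 1 := zpow_zero _
  rw [padicNorm.mul] at hnorm
  have hpn : padicNorm p ((p : ℕ) : ℚ) = (p : ℚ)⁻¹ := padicNorm.padicNorm_p_of_prime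
  rw [hpn] at hnorm
  calc padicNorm p (bernoulli n) = padicNorm p (bernoulli n) * (p : ℚ)⁻¹ * p := by
        field_simp
    _ ≤ 1 * p := mul_le_mul_of_nonneg_right hnorm (le_of_lt hppos)
    _ = p := one_mul _

lemma bernoulli_key (n : ℕ) (hn : 0 < n) (p : ℕ) :
    bernoulli n * p = ((∑ k ∈ Finset.range p, k ^ n : ℕ) : ℚ)
      - ∑ i ∈ Finset.range n,
          bernoulli i * ((n + 1).choose i : ℚ) * (p : ℚ) ^ (n + 1 - i) / (n + 1) := by
  have fh := sum_range_pow p n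
  rw [Finset.sum_range_succ] at fh
  have hlast : bernoulli n * ((n + 1).choose n : ℚ) * (p : ℚ) ^ (n + 1 - n) / (n + 1)
      = bernoulli n * p := by
    rw [Nat.choose_succ_self_right]
    have h1 : n + 1 - n = 1 := by omega
    rw [h1]
    have hne : ((n : ℚ) + 1) ≠ 0 := by positivity
    push_cast
    field_simp
  rw [hlast] at fh
  have hS : (∑ k ∈ Finset.range p, (k : ℚ) ^ n) = ((∑ k ∈ Finset.range p, k ^ n : ℕ) : ℚ) := by
    push_cast; rfl
  rw [← hS]
  linarith [fh]

lemma step_b {n : ℕ} (hn : 2 ≤ n) (hne : Even n) {p : ℕ} [hp : Fact p.Prime] :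
    padicNorm p ((p : ℚ) * bernoulli n - ((∑ k ∈ Finset.range p, k ^ n : ℕ) : ℚ))
      ≤ (p : ℚ)⁻¹ := by
  have hp1 : (1 : ℚ) < p := by exact_mod_cast hp.out.one_lt
  have hppos : (0 : ℚ) < p := lt_trans one_pos hp1
  have hinv : (0 : ℚ) ≤ (p : ℚ)⁻¹ := by positivity
  have key := bernoulli_key n (by omega) p
  have hdiff : (p : ℚ) * bernoulli n - ((∑ k ∈ Finset.range p, k ^ n : ℕ) : ℚ)
      = -∑ i ∈ Finset.range n,
          bernoulli i * ((n + 1).choose i : ℚ) * (p : ℚ) ^ (n + 1 - i) / (n + 1) := by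
    linarith [key]
  rw [hdiff, padicNorm.neg]
  refine padicNorm.sum_le' (fun i hi => ?_) hinv
  have hi' : i < n := Finset.mem_range.mp hi
  rcases eq_or_lt_of_le (show i + 1 ≤ n by omega) with heq | hlt
  · -- i = n - 1, j = 2
    have hin : i = n - 1 := by omega
    clear hi
    subst hin
    rw [term_rw (by omega) ((p : ℚ))]
    rcases eq_or_lt_of_le hn with h2 | h4
    · -- n = 2
      have hn2 : n = 2 := h2.symm
      subst hn2
      norm_num [bernoulli_one]
      have e1 : padicNorm p ((p : ℚ) ^ 2) = (p : ℚ) ^ (-2 : ℤ) := by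
        have hc : ((p : ℚ)) ^ 2 = (((p ^ 2 : ℕ)) : ℚ) := by push_cast; ring
        rw [hc, padicNorm_natCast_eq (pow_ne_zero _ hp.out.ne_zero), padicValNat.prime_pow]
        norm_num
      have hv : padicValRat p (2 : ℚ) ≤ 1 := by
        rw [show ((2 : ℚ)) = ((2 : ℕ) : ℚ) by norm_num, padicValRat.of_nat]
        exact_mod_cast Nat.le_of_lt_succ (padicValNat_lt (p := p) (j := 2) two_ne_zero)
      rw [e1, ← zpow_add₀ (ne_of_gt hppos)]
      calc (p : ℚ) ^ (-2 + padicValRat p 2) ≤ (p : ℚ) ^ (-1 : ℤ) :=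
            zpow_le_zpow_right₀ (le_of_lt hp1) (by omega)
        _ = (p : ℚ)⁻¹ := by rw [zpow_neg_one]
    · -- n ≥ 3, so n ≥ 4 even, n - 1 odd ≥ 3
      have hodd : Odd (n - 1) := by
        rcases hne with ⟨m, hm⟩
        exact ⟨m - 1, by omega⟩
      have hb0 : bernoulli (n - 1) = 0 := by
        rw [bernoulli_eq_bernoulli'_of_ne_one (by omega)]
        exact bernoulli'_eq_zero_of_odd hodd (by omega)
      rw [hb0]
      simp [padicNorm.zero, hinv]
  · -- i < n - 1, j ≥ 3
    have hB : padicNorm p (bernoulli i) ≤ p := bernoulli_padicNorm_le i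
    refine le_trans (term_bound hi' hB) ?_
    set j := n + 1 - i with hjdef
    have hj3 : 3 ≤ j := by omega
    set v := padicValNat p j with hvdef
    have hvj : (v : ℤ) ≤ (j : ℤ) - 2 := by
      by_contra hcon
      push_neg at hcon
      have hv1 : j - 1 ≤ v := by omega
      have h2v : 2 ^ (j - 1) ≤ 2 ^ v := Nat.pow_le_pow_right (by norm_num) hv1
      have h2j : 2 ^ (j - 1) ≤ j := le_trans h2v (two_pow_padicValNat_le (by omega))
      have hlt2 : j - 2 < 2 ^ (j - 2) := Nat.lt_two_pow_self
      have hpow : 2 ^ (j - 1) = 2 * 2 ^ (j - 2) := by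
        have : j - 1 = (j - 2) + 1 := by omega
        rw [this, pow_succ]
        ring
      omega
    calc (p : ℚ) ^ (1 + (v : ℤ) - (j : ℤ)) ≤ (p : ℚ) ^ (-1 : ℤ) :=
          zpow_le_zpow_right₀ (le_of_lt hp1) (by omega)
      _ = (p : ℚ)⁻¹ := by rw [zpow_neg_one]

lemma zmod_sum_range {p : ℕ} [Fact p.Prime] (f : ZMod p → ZMod p) :
    ∑ k ∈ Finset.range p, f (k : ZMod p) = ∑ x : ZMod p, f x := by
  refine Finset.sum_nbij' (fun k => (k : ZMod p)) (fun x => x.val) ?_ ?_ ?_ ?_ ?_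
  · intro a _; exact Finset.mem_univ _
  · intro x _; exact Finset.mem_range.mpr (ZMod.val_lt x)
  · intro a ha; exact ZMod.val_cast_of_lt (Finset.mem_range.mp ha)
  · intro x _; exact ZMod.natCast_rightInverse x
  · intro a _; rfl

lemma sum_pow_zmod {p : ℕ} [hp : Fact p.Prime] {n : ℕ} (hn : 0 < n) :
    ∑ x : ZMod p, x ^ n = if (p - 1) ∣ n then (-1 : ZMod p) else 0 := by
  classical
  have key := FiniteField.sum_pow_units (ZMod p) n
  rw [ZMod.card] at key
  rw [← key]
  let φ : (ZMod p)ˣ ↪ ZMod p := ⟨fun x ↦ x, Units.val_injective⟩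
  have huniv : Finset.univ.map φ = Finset.univ \ {(0 : ZMod p)} := by
    ext x
    simp only [Finset.mem_map, Finset.mem_univ, Function.Embedding.coeFn_mk, true_and,
      Finset.mem_sdiff, Finset.mem_singleton, φ]
    exact isUnit_iff_ne_zero
  calc
    ∑ x : ZMod p, x ^ n = ∑ x ∈ Finset.univ \ {(0 : ZMod p)}, x ^ n := by
      rw [← Finset.sum_sdiff (Finset.singleton_subset_iff.mpr (Finset.mem_univ 0)),
        Finset.sum_singleton, zero_pow hn.ne', add_zero]
    _ = ∑ x : (ZMod p)ˣ, (x : ZMod p) ^ n := by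
      rw [← huniv, Finset.sum_map]; rfl

lemma sum_pow_cast_zmod (p n : ℕ) [hp : Fact p.Prime] (hn : 0 < n) :
    ((∑ k ∈ Finset.range p, k ^ n : ℕ) : ZMod p) = if (p - 1) ∣ n then -1 else 0 := by
  push_cast
  rw [zmod_sum_range (f := fun x => x ^ n)]
  exact sum_pow_zmod hn

lemma norm_S_add_one {p n : ℕ} [hp : Fact p.Prime] (hn : 0 < n) (hd : (p - 1) ∣ n) :
    padicNorm p (((∑ k ∈ Finset.range p, k ^ n : ℕ) : ℚ) + 1) ≤ (p : ℚ)⁻¹ := by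
  have hdvd : ((p ^ 1 : ℕ) : ℤ) ∣ ((∑ k ∈ Finset.range p, k ^ n : ℕ) + 1 : ℤ) := by
    rw [pow_one, ← ZMod.intCast_zmod_eq_zero_iff_dvd, Int.cast_add, Int.cast_one,
      Int.cast_natCast, sum_pow_cast_zmod p n hn, if_pos hd]
    ring
  have := (padicNorm.dvd_iff_norm_le (p := p) (n := 1)
    (z := ((∑ k ∈ Finset.range p, k ^ n : ℕ) + 1 : ℤ))).mp hdvd
  norm_num at this
  exact le_trans (le_of_eq (by push_cast; ring)) this

lemma norm_S {p n : ℕ} [hp : Fact p.Prime] (hn : 0 < n) (hd : ¬(p - 1) ∣ n) :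
    padicNorm p ((∑ k ∈ Finset.range p, k ^ n : ℕ) : ℚ) ≤ (p : ℚ)⁻¹ := by
  have hdvd : ((p ^ 1 : ℕ) : ℤ) ∣ ((∑ k ∈ Finset.range p, k ^ n : ℕ) : ℤ) := by
    rw [pow_one, ← ZMod.intCast_zmod_eq_zero_iff_dvd, Int.cast_natCast,
      sum_pow_cast_zmod p n hn, if_neg hd]
  have := (padicNorm.dvd_iff_norm_le (p := p) (n := 1)
    (z := ((∑ k ∈ Finset.range p, k ^ n : ℕ) : ℤ))).mp hdvd
  norm_num at this
  exact le_trans (le_of_eq (by push_cast; ring)) this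

lemma int_of_padicNorm_le_one {x : ℚ} (h : ∀ q : ℕ, q.Prime → padicNorm q x ≤ 1) :
    ∃ z : ℤ, x = z := by
  refine ⟨x.num, Eq.symm ?_⟩
  rw [← Rat.den_eq_one_iff]
  by_contra hd
  obtain ⟨q, hq, hqd⟩ := Nat.exists_prime_and_dvd hd
  haveI : Fact q.Prime := ⟨hq⟩
  have hx : x ≠ 0 := by
    intro h0
    rw [h0] at hd
    exact hd rfl
  have hnum : ¬(q : ℤ) ∣ x.num := by
    intro hdvd
    have h1 : q ∣ x.num.natAbs := by
      exact Int.natCast_dvd_natCast.mp (Int.dvd_natAbs.mpr hdvd)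
    have h2 := Nat.Coprime.eq_one_of_dvd (Nat.Coprime.coprime_dvd_left h1 x.reduced) hqd
    exact hq.one_lt.ne' h2
  have hv1 : 1 ≤ padicValNat q x.den :=
    one_le_padicValNat_of_dvd x.den_pos.ne' hqd
  have hval : padicValRat q x ≤ -1 := by
    rw [padicValRat]
    have h0 : padicValInt q x.num = 0 := padicValInt.eq_zero_of_not_dvd hnum
    omega
  have hnorm : (q : ℚ) ≤ padicNorm q x := by
    rw [padicNorm.eq_zpow_of_nonzero hx]
    calc (q : ℚ) = (q : ℚ) ^ (1 : ℤ) := (zpow_one _).symm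
      _ ≤ (q : ℚ) ^ (-padicValRat q x) :=
          zpow_le_zpow_right₀ (by exact_mod_cast hq.one_lt.le) (by omega)
  have hq1 : (1 : ℚ) < q := by exact_mod_cast hq.one_lt
  linarith [h q hq]

lemma mem_P {n p : ℕ} (hn : 0 < n) (hp : p.Prime) (hd : (p - 1) ∣ n) :
    p ∈ (Finset.range (n + 2)).filter (fun p => p.Prime ∧ (p - 1) ∣ n) := by
  refine Finset.mem_filter.mpr ⟨Finset.mem_range.mpr ?_, hp, hd⟩
  have h1 := Nat.le_of_dvd hn hd
  have h2 := hp.two_le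
  omega

lemma main_norm_le (n : ℕ) (hn : 0 < n) (hne : Even n) (q : ℕ) (hq : q.Prime) :
    padicNorm q (bernoulli n +
      ∑ p ∈ (Finset.range (n + 2)).filter (fun p => p.Prime ∧ (p - 1) ∣ n), (1 : ℚ) / p)
      ≤ 1 := by
  haveI : Fact q.Prime := ⟨hq⟩
  have hq1 : (1 : ℚ) < q := by exact_mod_cast hq.one_lt
  have hqpos : (0 : ℚ) < q := lt_trans one_pos hq1
  have hn2 : 2 ≤ n := by
    obtain ⟨m, rfl⟩ := hne
    omega
  have hB := step_b hn2 hne (p := q)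
  set P := (Finset.range (n + 2)).filter (fun p => p.Prime ∧ (p - 1) ∣ n) with hP
  have hone : ∀ p ∈ P, p ≠ q → padicNorm q ((1 : ℚ) / p) = 1 := by
    intro p hp hpq
    obtain ⟨_, hpp, _⟩ := Finset.mem_filter.mp hp
    haveI : Fact p.Prime := ⟨hpp⟩
    rw [padicNorm.div, padicNorm.one,
      padicNorm.padicNorm_of_prime_of_ne (fun h => hpq h.symm), div_one]
  by_cases hmem : q ∈ P
  · obtain ⟨_, _, hdq⟩ := Finset.mem_filter.mp hmem
    rw [← Finset.add_sum_erase _ _ hmem, ← add_assoc]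
    refine le_trans padicNorm.nonarchimedean (max_le ?_ ?_)
    · have hqne : (q : ℚ) ≠ 0 := ne_of_gt hqpos
      have heq : bernoulli n + 1 / (q : ℚ) = ((q : ℚ) * bernoulli n + 1) / q := by
        field_simp
      rw [heq, padicNorm.div, padicNorm.padicNorm_p_of_prime]
      have h1 : padicNorm q ((q : ℚ) * bernoulli n + 1) ≤ (q : ℚ)⁻¹ := by
        have hsplit : (q : ℚ) * bernoulli n + 1
            = ((q : ℚ) * bernoulli n - ((∑ k ∈ Finset.range q, k ^ n : ℕ) : ℚ))
              + (((∑ k ∈ Finset.range q, k ^ n : ℕ) : ℚ) + 1) := by ring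
        rw [hsplit]
        exact le_trans padicNorm.nonarchimedean (max_le hB (norm_S_add_one hn hdq))
      rw [div_inv_eq_mul]
      calc padicNorm q ((q : ℚ) * bernoulli n + 1) * q ≤ (q : ℚ)⁻¹ * q :=
            mul_le_mul_of_nonneg_right h1 (le_of_lt hqpos)
        _ = 1 := inv_mul_cancel₀ hqne
    · refine padicNorm.sum_le' (fun p hp => ?_) zero_le_one
      exact le_of_eq (hone p (Finset.mem_of_mem_erase hp) (Finset.ne_of_mem_erase hp))
  · have hdq : ¬(q - 1) ∣ n := fun hd => hmem (mem_P hn hq hd)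
    refine le_trans padicNorm.nonarchimedean (max_le ?_ ?_)
    · have h1 : padicNorm q ((q : ℚ) * bernoulli n) ≤ (q : ℚ)⁻¹ := by
        have hsplit : (q : ℚ) * bernoulli n
            = ((q : ℚ) * bernoulli n - ((∑ k ∈ Finset.range q, k ^ n : ℕ) : ℚ))
              + ((∑ k ∈ Finset.range q, k ^ n : ℕ) : ℚ) := by ring
        rw [hsplit]
        exact le_trans padicNorm.nonarchimedean (max_le hB (norm_S hn hdq))
      rw [padicNorm.mul, padicNorm.padicNorm_p_of_prime] at h1
      have h2 : padicNorm q (bernoulli n) = (q : ℚ) * ((q : ℚ)⁻¹ * padicNorm q (bernoulli n)) := by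
        field_simp
      rw [h2]
      calc (q : ℚ) * ((q : ℚ)⁻¹ * padicNorm q (bernoulli n)) ≤ (q : ℚ) * (q : ℚ)⁻¹ :=
            mul_le_mul_of_nonneg_left h1 (le_of_lt hqpos)
        _ = 1 := mul_inv_cancel₀ (ne_of_gt hqpos)
    · refine padicNorm.sum_le' (fun p hp => ?_) zero_le_one
      refine le_of_eq (hone p hp (fun hpq => hmem (hpq ▸ hp)))

theorem part1 (n : ℕ) (hn : 0 < n) (hne : Even n) :
    ∃ z : ℤ, bernoulli n +
        ∑ p ∈ (Finset.range (n + 2)).filter (fun p => p.Prime ∧ (p - 1) ∣ n),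
          (1 : ℚ) / p = z := by
  obtain ⟨z, hz⟩ := int_of_padicNorm_le_one (fun q hq => main_norm_le n hn hne q hq)
  exact ⟨z, hz⟩

lemma sum_inv_primes (P : Finset ℕ) (hP : ∀ p ∈ P, p.Prime) :
    ∑ p ∈ P, (1 : ℚ) / p
      = ((∑ p ∈ P, ∏ r ∈ P.erase p, r : ℕ) : ℚ) / ((∏ p ∈ P, p : ℕ) : ℚ) := by
  have hD0 : 0 < ∏ p ∈ P, p := Finset.prod_pos (fun p hp => (hP p hp).pos)
  have hDne : ((∏ p ∈ P, p : ℕ) : ℚ) ≠ 0 := by exact_mod_cast hD0.ne'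
  rw [Nat.cast_sum, Finset.sum_div]
  refine Finset.sum_congr rfl (fun p hp => ?_)
  have hpne : ((p : ℕ) : ℚ) ≠ 0 := by exact_mod_cast (hP p hp).pos.ne'
  have hfact : ((∏ r ∈ P, r : ℕ) : ℚ) = (p : ℚ) * ((∏ r ∈ P.erase p, r : ℕ) : ℚ) := by
    rw [← Finset.mul_prod_erase P _ hp]
    push_cast
    ring
  rw [div_eq_div_iff hpne hDne, hfact]
  push_cast
  ring

theorem part2 (n : ℕ) (hn : 0 < n) (hne : Even n) :
    (bernoulli n).den =
      ∏ p ∈ (Finset.range (n + 2)).filter (fun p => p.Prime ∧ (p - 1) ∣ n), p := by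
  obtain ⟨z, hz⟩ := part1 n hn hne
  set P := (Finset.range (n + 2)).filter (fun p => p.Prime ∧ (p - 1) ∣ n) with hPdef
  have hP : ∀ p ∈ P, p.Prime := fun p hp => (Finset.mem_filter.mp hp).2.1
  set D := ∏ p ∈ P, p with hDdef
  set N := ∑ p ∈ P, ∏ r ∈ P.erase p, r with hNdef
  have hD0 : 0 < D := Finset.prod_pos (fun p hp => (hP p hp).pos)
  have hDne : ((D : ℕ) : ℚ) ≠ 0 := by exact_mod_cast hD0.ne'
  have hBn : bernoulli n = ((z * D - N : ℤ) : ℚ) / ((D : ℤ) : ℚ) := by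
    have hsum := sum_inv_primes P hP
    rw [hsum] at hz
    have : bernoulli n = (z : ℚ) - (N : ℚ) / (D : ℚ) := by linarith [hz]
    rw [this]
    push_cast
    field_simp
  have hcop : Nat.Coprime (z * D - N : ℤ).natAbs ((D : ℤ) : ℤ).natAbs := by
    rw [Int.natAbs_natCast]
    by_contra hcon
    obtain ⟨t, ht, htd⟩ := Nat.exists_prime_and_dvd hcon
    have htD : t ∣ D := htd.trans (Nat.gcd_dvd_right _ _)
    have htA : t ∣ (z * D - N : ℤ).natAbs := htd.trans (Nat.gcd_dvd_left _ _)
    have htZ : (t : ℤ) ∣ (z * D - N : ℤ) := Int.dvd_natAbs.mp (Int.natCast_dvd_natCast.mpr htA)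
    -- t ∈ P
    obtain ⟨p0, hp0P, hp0d⟩ := (Nat.Prime.prime ht).exists_mem_finset_dvd
      (show t ∣ ∏ p ∈ P, p from htD)
    have htP : t ∈ P := by
      rwa [(Nat.prime_dvd_prime_iff_eq ht (hP p0 hp0P)).mp hp0d]
    -- t ∣ N
    have htN : (t : ℤ) ∣ (N : ℤ) := by
      have h1 : (t : ℤ) ∣ (z * D : ℤ) := Dvd.dvd.mul_left (by exact_mod_cast htD) z
      have := dvd_sub h1 htZ
      simpa using this
    have htNn : t ∣ N := by exact_mod_cast htN
    -- but t ∤ N since t divides all terms except the t-th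
    have hrest : t ∣ ∑ p ∈ P.erase t, ∏ r ∈ P.erase p, r := by
      refine Finset.dvd_sum (fun p hp => ?_)
      have hpt : p ≠ t := Finset.ne_of_mem_erase hp
      exact Finset.dvd_prod_of_mem _ (Finset.mem_erase.mpr ⟨fun h => hpt h.symm, htP⟩)
    have hterm : t ∣ ∏ r ∈ P.erase t, r := by
      have hsplit : N = (∏ r ∈ P.erase t, r) + ∑ p ∈ P.erase t, ∏ r ∈ P.erase p, r :=
        (Finset.add_sum_erase _ _ htP).symm
      have hsub := Nat.dvd_sub htNn hrest
      rwa [hsplit, Nat.add_sub_cancel] at hsub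
    obtain ⟨r0, hr0, hr0d⟩ := (Nat.Prime.prime ht).exists_mem_finset_dvd hterm
    have : t = r0 := (Nat.prime_dvd_prime_iff_eq ht (hP r0 (Finset.mem_of_mem_erase hr0))).mp hr0d
    exact (Finset.ne_of_mem_erase hr0) this.symm
  have hden := Rat.den_div_eq_of_coprime (a := (z * D - N : ℤ)) (b := (D : ℤ))
    (by exact_mod_cast hD0) hcop
  rw [← hBn] at hden
  exact_mod_cast hden

/-- Clausen–von Staudt: for even positive `n`, `B_n + ∑_{p-1 ∣ n} 1/p` is an
integer, and the denominator of `B_n` is the product of primes `p` with `p-1 ∣ n`. -/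
theorem stmt_0 (n : ℕ) (hn : 0 < n) (hne : Even n) :
    (∃ z : ℤ, bernoulli n +
        ∑ p ∈ (Finset.range (n + 2)).filter (fun p => p.Prime ∧ (p - 1) ∣ n),
          (1 : ℚ) / p = z) ∧
    (bernoulli n).den =
      ∏ p ∈ (Finset.range (n + 2)).filter (fun p => p.Prime ∧ (p - 1) ∣ n), p := by
  exact ⟨part1 n hn hne, part2 n hn hne⟩
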